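/- Define h₂(α,β), h₃(α,β), h₄(α,β) as the 2×2, 3×3, 4×4 Hankel determinants det[K_{i+j}]_{1≤i,j≤n} built from the sequence K₁ = 2α, K₂ = 2β² + 10α², K₃ = 24α³, K₄ = 2β⁴ + 4α²β² + 66α⁴, K₅ = 160α⁵, K₆ = 2β⁶ + 6α²β⁴ + 6α⁴β² + 386α⁶, K₇ = 896α⁷, K₈ = 2β⁸ + 8α²β⁶ + 12α⁴β⁴ + 8α⁶β² + 2050α⁸. Then h₄(α,β) = -256α⁶(β² - 3α²)⁴(β² + α²)³, and if β² = 3α² then h₃(α,β) = -65536α¹². Consequently, for any real α ≠ 0 and real β, at least one of h₃(α,β), h₄(α,β) is negative. -/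
import Mathlib


open Matrix

/-- The free cumulants of `(α+iβ)X₁X₂ + (α-iβ)X₂X₁` for free standard semicircular
`X₁, X₂`. -/
noncomputable def cumul (α β : ℝ) : ℕ → ℝ
  | 1 => 2 * α
  | 2 => 2 * β ^ 2 + 10 * α ^ 2
  | 3 => 24 * α ^ 3
  | 4 => 2 * β ^ 4 + 4 * α ^ 2 * β ^ 2 + 66 * α ^ 4
  | 5 => 160 * α ^ 5
  | 6 => 2 * β ^ 6 + 6 * α ^ 2 * β ^ 4 + 6 * α ^ 4 * β ^ 2 + 386 * α ^ 6
  | 7 => 896 * α ^ 7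
  | 8 => 2 * β ^ 8 + 8 * α ^ 2 * β ^ 6 + 12 * α ^ 4 * β ^ 4 + 8 * α ^ 6 * β ^ 2
          + 2050 * α ^ 8
  | _ => 0

/-- The `n×n` Hankel determinant `det [K_{i+j}]_{1 ≤ i,j ≤ n}`. -/
noncomputable def hankel (α β : ℝ) (n : ℕ) : ℝ :=
  Matrix.det (Matrix.of fun i j : Fin n => cumul α β (i.val + j.val + 2))

lemma hankel4 (α β : ℝ) :
    hankel α β 4 = -256 * α ^ 6 * (β ^ 2 - 3 * α ^ 2) ^ 4 * (β ^ 2 + α ^ 2) ^ 3 := by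
  simp only [hankel, Matrix.det_succ_row_zero, Fin.sum_univ_succ, Matrix.of_apply,
    Matrix.submatrix_apply, Fin.succAbove, Matrix.det_fin_zero]
  norm_num [cumul, Fin.lt_def, Fin.succ]
  ring

lemma hankel3 (α β : ℝ) :
    hankel α β 3 = 32 * α ^ 2 * β ^ 10 - 352 * α ^ 4 * β ^ 8 - 320 * α ^ 6 * β ^ 6
      - 1600 * α ^ 8 * β ^ 4 - 5856 * α ^ 10 * β ^ 2 - 4192 * α ^ 12 := by
  simp only [hankel, Matrix.det_succ_row_zero, Fin.sum_univ_succ, Matrix.of_apply,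
    Matrix.submatrix_apply, Fin.succAbove, Matrix.det_fin_zero]
  norm_num [cumul, Fin.lt_def, Fin.succ]
  ring

theorem hankel_determinants (α β : ℝ) :
    hankel α β 4 = -256 * α ^ 6 * (β ^ 2 - 3 * α ^ 2) ^ 4 * (β ^ 2 + α ^ 2) ^ 3 ∧
    (β ^ 2 = 3 * α ^ 2 → hankel α β 3 = -65536 * α ^ 12) ∧
    (α ≠ 0 → hankel α β 3 < 0 ∨ hankel α β 4 < 0) := by
  refine ⟨hankel4 α β, fun h => ?_, fun hα => ?_⟩
  · rw [hankel3]
    linear_combination (32 * α ^ 2 * β ^ 8 - 256 * α ^ 4 * β ^ 6 - 1088 * α ^ 6 * β ^ 4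
      - 4864 * α ^ 8 * β ^ 2 - 20448 * α ^ 10) * h
  · by_cases h : β ^ 2 = 3 * α ^ 2
    · left
      have e : hankel α β 3 = -65536 * α ^ 12 := by
        rw [hankel3]
        linear_combination (32 * α ^ 2 * β ^ 8 - 256 * α ^ 4 * β ^ 6 - 1088 * α ^ 6 * β ^ 4
          - 4864 * α ^ 8 * β ^ 2 - 20448 * α ^ 10) * h
      rw [e]
      have h12 : (0:ℝ) < α ^ 12 := by positivity
      linarith
    · right
      rw [hankel4]
      have h1 : (0:ℝ) < α ^ 6 := by positivity
      have h2 : (0:ℝ) < (β ^ 2 - 3 * α ^ 2) ^ 4 := by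
        have : β ^ 2 - 3 * α ^ 2 ≠ 0 := sub_ne_zero.mpr h
        positivity
      have h3 : (0:ℝ) < (β ^ 2 + α ^ 2) ^ 3 := by positivity
      nlinarith [mul_pos (mul_pos h1 h2) h3]
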